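/- arXiv:2405.09356 — 10 statements merged into one kernel-verified Lean document; each statement's English description precedes it below -/
import Mathlib

section
/- Let I and J be nonempty finite sets and R : I × J → ℝ. Let x : I → ℝ satisfy x_i ≥ 0 for all i and Σ_{i∈I} x_i = 1, let q : J → ℝ satisfy q_j ∈ {0,1} for all j and Σ_{j∈J} q_j = 1, and let f ∈ ℝ satisfy: for every j' ∈ J with q_{j'} = 1, f = Σ_{i∈I} R_{i,j'} x_i. Then for every j ∈ J, f ≤ Σ_{i∈I} R_{i,j} x_i + Σ_{j'∈J, j'≠j} (max_{i∈I} (R_{i,j'} − R_{i,j})) · q_{j'}. -/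
theorem stmt_0 {I J : Type*} [Fintype I] [Fintype J] [DecidableEq I] [DecidableEq J] [Nonempty I] [Nonempty J]
    (R : I → J → ℝ) (x : I → ℝ) (q : J → ℝ) (f : ℝ)
    (hx0 : ∀ i, 0 ≤ x i) (hx1 : ∑ i, x i = 1)
    (hq01 : ∀ j, q j = 0 ∨ q j = 1) (hq1 : ∑ j, q j = 1)
    (hf : ∀ j', q j' = 1 → f = ∑ i, R i j' * x i) :
    ∀ j, f ≤ ∑ i, R i j * x i +
      ∑ j' ∈ Finset.univ.filter (fun j' => j' ≠ j),
        (Finset.univ.sup' Finset.univ_nonempty (fun i => R i j' - R i j)) * q j' := by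
  obtain ⟨js, hjs⟩ : ∃ j', q j' = 1 := by
    by_contra h
    push_neg at h
    have h0 : ∀ j', q j' = 0 := fun j' => (hq01 j').resolve_right (h j')
    simp [h0] at hq1
  have hq0 : ∀ j', j' ≠ js → q j' = 0 := by
    intro j' hne
    by_contra h
    have h1 : q j' = 1 := (hq01 j').resolve_left h
    have hs : ∑ j ∈ ({j', js} : Finset J), q j ≤ ∑ j, q j := by
      apply Finset.sum_le_sum_of_subset_of_nonneg (Finset.subset_univ _)
      intro i _ _
      rcases hq01 i with h | h <;> simp [h]
    rw [Finset.sum_pair hne, h1, hjs, hq1] at hs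
    linarith
  intro j
  have hfval := hf js hjs
  by_cases hcase : j = js
  · subst hcase
    have hz : ∑ j' ∈ Finset.univ.filter (fun j' => j' ≠ j),
        (Finset.univ.sup' Finset.univ_nonempty (fun i => R i j' - R i j)) * q j' = 0 := by
      apply Finset.sum_eq_zero
      intro j' hj'
      rw [Finset.mem_filter] at hj'
      rw [hq0 j' hj'.2, mul_zero]
    rw [hz, hfval, add_zero]
  · have hmem : js ∈ Finset.univ.filter (fun j' => j' ≠ j) := by
      simp [Ne.symm hcase]
    have hsum : ∑ j' ∈ Finset.univ.filter (fun j' => j' ≠ j),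
        (Finset.univ.sup' Finset.univ_nonempty (fun i => R i j' - R i j)) * q j'
        = Finset.univ.sup' Finset.univ_nonempty (fun i => R i js - R i j) := by
      rw [Finset.sum_eq_single_of_mem js hmem]
      · rw [hjs, mul_one]
      · intro j' _ hne
        rw [hq0 j' (by
          intro hc; exact hne (by rw [hc]))]
        ring
    rw [hsum, hfval]
    set M := Finset.univ.sup' Finset.univ_nonempty (fun i => R i js - R i j) with hM
    have hle : ∀ i : I, R i js * x i ≤ R i j * x i + M * x i := by
      intro i
      have h1 : R i js - R i j ≤ M := by rw [hM]; exact Finset.le_sup' (fun i => R i js - R i j) (Finset.mem_univ i)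
      nlinarith [hx0 i]
    calc ∑ i, R i js * x i ≤ ∑ i, (R i j * x i + M * x i) := Finset.sum_le_sum fun i _ => hle i
      _ = ∑ i, R i j * x i + M * ∑ i, x i := by rw [Finset.sum_add_distrib, Finset.mul_sum]
      _ = ∑ i, R i j * x i + M := by rw [hx1, mul_one]
end

section
/- Let I and J be nonempty finite sets and R : I × J → ℝ. Let q : J → ℝ satisfy q_j ∈ {0,1} for all j and Σ_{j∈J} q_j = 1. Then for every j ∈ J, Σ_{j'∈J, j'≠j} (max_{i∈I} (R_{i,j'} − R_{i,j})) · q_{j'} ≤ (max_{l∈J} max_{i∈I} (R_{i,l} − R_{i,j})) · (1 − q_j). Consequently, for any x in the simplex over I and any f with f = Σ_{i∈I} R_{i,j'} x_i whenever q_{j'} = 1, the inequality f ≤ Σ_{i∈I} R_{i,j} x_i + Σ_{j'≠j} (max_{i∈I}(R_{i,j'} − R_{i,j})) q_{j'} is at least as tight as the big-M constraint f ≤ Σ_{i∈I} R_{i,j} x_i + (max_{l∈J} max_{i∈I} (R_{i,l} − R_{i,j}))(1 − q_j). -/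
theorem stmt_1 {I J : Type*} [Fintype I] [Fintype J] [DecidableEq I] [DecidableEq J] [Nonempty I] [Nonempty J]
    (R : I → J → ℝ) (q : J → ℝ)
    (hq01 : ∀ j, q j = 0 ∨ q j = 1) (hq1 : ∑ j, q j = 1) :
    (∀ j, ∑ j' ∈ Finset.univ.filter (fun j' => j' ≠ j),
        (Finset.univ.sup' Finset.univ_nonempty (fun i => R i j' - R i j)) * q j'
      ≤ (Finset.univ.sup' Finset.univ_nonempty (fun l =>
          Finset.univ.sup' Finset.univ_nonempty (fun i => R i l - R i j))) * (1 - q j)) ∧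
    (∀ x : I → ℝ, (∀ i, 0 ≤ x i) → ∑ i, x i = 1 →
      ∀ f : ℝ, (∀ j', q j' = 1 → f = ∑ i, R i j' * x i) →
      ∀ j, ∑ i, R i j * x i +
          ∑ j' ∈ Finset.univ.filter (fun j' => j' ≠ j),
            (Finset.univ.sup' Finset.univ_nonempty (fun i => R i j' - R i j)) * q j'
        ≤ ∑ i, R i j * x i +
          (Finset.univ.sup' Finset.univ_nonempty (fun l =>
            Finset.univ.sup' Finset.univ_nonempty (fun i => R i l - R i j))) * (1 - q j)) := by
  have key : ∀ j, ∑ j' ∈ Finset.univ.filter (fun j' => j' ≠ j),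
        (Finset.univ.sup' Finset.univ_nonempty (fun i => R i j' - R i j)) * q j'
      ≤ (Finset.univ.sup' Finset.univ_nonempty (fun l =>
          Finset.univ.sup' Finset.univ_nonempty (fun i => R i l - R i j))) * (1 - q j) := by
    intro j
    set M := Finset.univ.sup' Finset.univ_nonempty (fun l =>
        Finset.univ.sup' Finset.univ_nonempty (fun i => R i l - R i j)) with hM
    have hqnn : ∀ j', (0:ℝ) ≤ q j' := by
      intro j'; rcases hq01 j' with h | h <;> simp [h]
    have step : ∑ j' ∈ Finset.univ.filter (fun j' => j' ≠ j),
        (Finset.univ.sup' Finset.univ_nonempty (fun i => R i j' - R i j)) * q j'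
        ≤ ∑ j' ∈ Finset.univ.filter (fun j' => j' ≠ j), M * q j' := by
      apply Finset.sum_le_sum
      intro j' _
      exact mul_le_mul_of_nonneg_right
        (Finset.le_sup' (fun l => Finset.univ.sup' Finset.univ_nonempty
          (fun i => R i l - R i j)) (Finset.mem_univ j')) (hqnn j')
    refine step.trans ?_
    rw [← Finset.mul_sum]
    have hsum : ∑ j' ∈ Finset.univ.filter (fun j' => j' ≠ j), q j' = 1 - q j := by
      rw [Finset.filter_ne', Finset.sum_erase_eq_sub (Finset.mem_univ j), hq1]
    rw [hsum]
  refine ⟨key, ?_⟩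
  intro x _ _ f _ j
  exact add_le_add_right (key j) _
end

section
/- Let I and J be nonempty finite sets and C : I × J → ℝ. Let x : I → ℝ satisfy x_i ≥ 0 for all i and Σ_{i∈I} x_i = 1, let q : J → ℝ satisfy q_j ∈ {0,1} for all j and Σ_{j∈J} q_j = 1, and let s ∈ ℝ satisfy: for every j' ∈ J with q_{j'} = 1, s = Σ_{i∈I} C_{i,j'} x_i. Then for every j ∈ J, s ≤ Σ_{i∈I} C_{i,j} x_i + Σ_{j'∈J, j'≠j} (max_{i∈I} (C_{i,j'} − C_{i,j})) · q_{j'}. -/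
theorem stmt_2 {I J : Type*} [Fintype I] [Fintype J] [DecidableEq I] [DecidableEq J] [Nonempty I] [Nonempty J]
    (C : I → J → ℝ) (x : I → ℝ) (q : J → ℝ) (s : ℝ)
    (hx0 : ∀ i, 0 ≤ x i) (hx1 : ∑ i, x i = 1)
    (hq01 : ∀ j, q j = 0 ∨ q j = 1) (hq1 : ∑ j, q j = 1)
    (hs : ∀ j', q j' = 1 → s = ∑ i, C i j' * x i) :
    ∀ j, s ≤ ∑ i, C i j * x i +
      ∑ j' ∈ Finset.univ.filter (fun j' => j' ≠ j),
        (Finset.univ.sup' Finset.univ_nonempty (fun i => C i j' - C i j)) * q j' := by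
  have hqnn : ∀ j, 0 ≤ q j := by
    intro j; rcases hq01 j with h | h <;> simp [h]
  obtain ⟨j₀, hj₀⟩ : ∃ j₀, q j₀ = 1 := by
    by_contra h
    push_neg at h
    have : ∀ j, q j = 0 := by
      intro j; rcases hq01 j with h' | h'
      · exact h'
      · exact absurd h' (h j)
    simp [this] at hq1
  have huniq : ∀ j', j' ≠ j₀ → q j' = 0 := by
    intro j' hne
    rcases hq01 j' with h | h
    · exact h
    · exfalso
      have h1 : q j' + q j₀ ≤ ∑ j, q j := by
        have := Finset.add_sum_erase Finset.univ q (Finset.mem_univ j')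
        rw [← this]
        have : q j₀ ≤ ∑ j ∈ Finset.univ.erase j', q j := by
          apply Finset.single_le_sum (fun i _ => hqnn i)
          simp [Finset.mem_erase, Ne.symm hne]
        linarith
      rw [hq1, h, hj₀] at h1
      linarith
  intro j
  have hs0 := hs j₀ hj₀
  have hsum : ∑ j' ∈ Finset.univ.filter (fun j' => j' ≠ j),
      (Finset.univ.sup' Finset.univ_nonempty (fun i => C i j' - C i j)) * q j'
      = if j₀ ≠ j then (Finset.univ.sup' Finset.univ_nonempty (fun i => C i j₀ - C i j)) else 0 := by
    rw [Finset.sum_eq_single j₀]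
    · by_cases hcase : j₀ ≠ j
      · simp [hcase, hj₀]
      · push_neg at hcase
        subst hcase
        simp only [ne_eq, not_true_eq_false, if_false, hj₀, mul_one]
        have : (fun i => C i j₀ - C i j₀) = fun _ => (0:ℝ) := by ext i; ring
        rw [this, Finset.sup'_const]
    · intro b hb hbne
      rw [huniq b hbne, mul_zero]
    · intro hnotmem
      simp only [Finset.mem_filter, Finset.mem_univ, true_and] at hnotmem
      push_neg at hnotmem
      simp [hnotmem, hj₀]
  rw [hsum]
  by_cases hcase : j₀ = j
  · subst hcase
    simp [hs0]
  · rw [if_pos hcase]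
    have key : ∑ i, (C i j₀ - C i j) * x i ≤
        Finset.univ.sup' Finset.univ_nonempty (fun i => C i j₀ - C i j) := by
      calc ∑ i, (C i j₀ - C i j) * x i
          ≤ ∑ i, (Finset.univ.sup' Finset.univ_nonempty (fun i => C i j₀ - C i j)) * x i := by
            apply Finset.sum_le_sum
            intro i _
            exact mul_le_mul_of_nonneg_right
              (Finset.le_sup' (fun i => C i j₀ - C i j) (Finset.mem_univ i)) (hx0 i)
        _ = Finset.univ.sup' Finset.univ_nonempty (fun i => C i j₀ - C i j) := by
            rw [← Finset.mul_sum, hx1, mul_one]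
    have : ∑ i, (C i j₀ - C i j) * x i = ∑ i, C i j₀ * x i - ∑ i, C i j * x i := by
      rw [← Finset.sum_sub_distrib]
      congr 1; ext i; ring
    rw [hs0]
    linarith
end

section
/- Let I and J be nonempty finite sets and C : I × J → ℝ. Let q : J → ℝ satisfy q_j ∈ {0,1} for all j and Σ_{j∈J} q_j = 1. Then for every j ∈ J, Σ_{j'∈J, j'≠j} (max_{i∈I} (C_{i,j'} − C_{i,j})) · q_{j'} ≤ (max_{l∈J} max_{i∈I} (C_{i,l} − C_{i,j})) · (1 − q_j). -/
theorem stmt_3 {I J : Type*} [Fintype I] [Fintype J] [DecidableEq I] [DecidableEq J] [Nonempty I] [Nonempty J]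
    (C : I → J → ℝ) (q : J → ℝ)
    (hq01 : ∀ j, q j = 0 ∨ q j = 1) (hq1 : ∑ j, q j = 1) :
    ∀ j, ∑ j' ∈ Finset.univ.filter (fun j' => j' ≠ j),
        (Finset.univ.sup' Finset.univ_nonempty (fun i => C i j' - C i j)) * q j'
      ≤ (Finset.univ.sup' Finset.univ_nonempty (fun l =>
          Finset.univ.sup' Finset.univ_nonempty (fun i => C i l - C i j))) * (1 - q j) := by
  intro j
  set M := Finset.univ.sup' Finset.univ_nonempty (fun l =>
      Finset.univ.sup' Finset.univ_nonempty (fun i => C i l - C i j)) with hM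
  have hqnn : ∀ j', 0 ≤ q j' := fun j' => by rcases hq01 j' with h | h <;> simp [h]
  have hsum : ∑ j' ∈ Finset.univ.filter (fun j' => j' ≠ j), q j' = 1 - q j := by
    have := Finset.sum_filter_add_sum_filter_not Finset.univ (fun j' => j' ≠ j) q
    have h2 : ∑ j' ∈ Finset.univ.filter (fun j' => ¬ j' ≠ j), q j' = q j := by
      simp [Finset.filter_eq']
    linarith [hq1, this, h2]
  calc ∑ j' ∈ Finset.univ.filter (fun j' => j' ≠ j),
        (Finset.univ.sup' Finset.univ_nonempty (fun i => C i j' - C i j)) * q j'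
      ≤ ∑ j' ∈ Finset.univ.filter (fun j' => j' ≠ j), M * q j' := by
        apply Finset.sum_le_sum
        intro j' _
        exact mul_le_mul_of_nonneg_right
          (Finset.le_sup' (fun l => Finset.univ.sup' Finset.univ_nonempty
            (fun i => C i l - C i j)) (Finset.mem_univ j')) (hqnn j')
    _ = M * (1 - q j) := by rw [← Finset.mul_sum, hsum]
end

section
/- Let I and J be nonempty finite sets and R : I × J → ℝ. Let x : I → ℝ satisfy x_i ≥ 0 for all i and Σ_{i∈I} x_i = 1, let q : J → ℝ satisfy q_j ∈ {0,1} for all j and Σ_{j∈J} q_j = 1, and let f ∈ ℝ satisfy: for every j ∈ J with q_j = 1, f = Σ_{i∈I} R_{i,j} x_i. Then for every i ∈ I, f ≤ Σ_{j∈J} R_{i,j} q_j + Σ_{i'∈I, i'≠i} (max_{j∈J} (R_{i',j} − R_{i,j})) · x_{i'}. -/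
theorem stmt_4 {I J : Type*} [Fintype I] [Fintype J] [DecidableEq I] [DecidableEq J] [Nonempty I] [Nonempty J]
    (R : I → J → ℝ) (x : I → ℝ) (q : J → ℝ) (f : ℝ)
    (hx0 : ∀ i, 0 ≤ x i) (hx1 : ∑ i, x i = 1)
    (hq01 : ∀ j, q j = 0 ∨ q j = 1) (hq1 : ∑ j, q j = 1)
    (hf : ∀ j, q j = 1 → f = ∑ i, R i j * x i) :
    ∀ i, f ≤ ∑ j, R i j * q j +
      ∑ i' ∈ Finset.univ.filter (fun i' => i' ≠ i),
        (Finset.univ.sup' Finset.univ_nonempty (fun j => R i' j - R i j)) * x i' := by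
  intro i
  have hqnn : ∀ j, 0 ≤ q j := by
    intro j; rcases hq01 j with h | h <;> simp [h]
  obtain ⟨j0, hj0⟩ : ∃ j, q j = 1 := by
    by_contra h
    push_neg at h
    have hz : ∀ j, q j = 0 := fun j => (hq01 j).resolve_right (h j)
    simp [hz] at hq1
  have hqz : ∀ j, j ≠ j0 → q j = 0 := by
    intro j hj
    by_contra h
    have hj1 : q j = 1 := (hq01 j).resolve_left h
    have hsub : ({j0, j} : Finset J) ⊆ Finset.univ := Finset.subset_univ _
    have hpair : ∑ k ∈ ({j0, j} : Finset J), q k = 2 := by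
      rw [Finset.sum_pair (Ne.symm hj)]; rw [hj0, hj1]; norm_num
    have hle : ∑ k ∈ ({j0, j} : Finset J), q k ≤ ∑ k, q k :=
      Finset.sum_le_sum_of_subset_of_nonneg hsub (fun k _ _ => hqnn k)
    rw [hpair, hq1] at hle
    linarith
  have hRq : ∀ i' : I, ∑ j, R i' j * q j = R i' j0 := by
    intro i'
    rw [Finset.sum_eq_single j0]
    · rw [hj0, mul_one]
    · intro j _ hj; rw [hqz j hj, mul_zero]
    · intro h; exact absurd (Finset.mem_univ j0) h
  have hfv : f = ∑ i', R i' j0 * x i' := hf j0 hj0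
  rw [hRq i, hfv]
  have hsplit : ∀ g : I → ℝ, ∑ i', g i' = g i + ∑ i' ∈ Finset.univ.erase i, g i' :=
    fun g => (Finset.add_sum_erase _ g (Finset.mem_univ i)).symm
  have hfilter : Finset.univ.filter (fun i' => i' ≠ i) = Finset.univ.erase i := by
    ext a; simp [Finset.mem_erase, and_comm]
  rw [hfilter, hsplit (fun i' => R i' j0 * x i')]
  have hx1' : x i + ∑ i' ∈ Finset.univ.erase i, x i' = 1 := by
    rw [← hsplit x, hx1]
  have hRi : R i j0 = R i j0 * x i + ∑ i' ∈ Finset.univ.erase i, R i j0 * x i' := by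
    rw [← Finset.mul_sum, ← mul_add, hx1', mul_one]
  have key : ∑ i' ∈ Finset.univ.erase i, R i' j0 * x i' ≤
      ∑ i' ∈ Finset.univ.erase i, (R i j0 * x i' +
        (Finset.univ.sup' Finset.univ_nonempty (fun j => R i' j - R i j)) * x i') := by
    apply Finset.sum_le_sum
    intro i' _
    have hsup : R i' j0 - R i j0 ≤
        Finset.univ.sup' Finset.univ_nonempty (fun j => R i' j - R i j) :=
      Finset.le_sup' (fun j => R i' j - R i j) (Finset.mem_univ j0)
    nlinarith [hx0 i']
  rw [Finset.sum_add_distrib] at key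
  linarith [hRi]
end

section
/- Let I and J be nonempty finite sets and C : I × J → ℝ. Let x : I → ℝ satisfy x_i ≥ 0 for all i and Σ_{i∈I} x_i = 1, let q : J → ℝ satisfy q_j ∈ {0,1} for all j and Σ_{j∈J} q_j = 1, and let s ∈ ℝ satisfy: for every j ∈ J with q_j = 1, s = Σ_{i∈I} C_{i,j} x_i. Then for every i ∈ I, s ≤ Σ_{j∈J} C_{i,j} q_j + Σ_{i'∈I, i'≠i} (max_{j∈J} (C_{i',j} − C_{i,j})) · x_{i'}. -/
theorem stmt_5 {I J : Type*} [Fintype I] [Fintype J] [DecidableEq I] [DecidableEq J] [Nonempty I] [Nonempty J]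
    (C : I → J → ℝ) (x : I → ℝ) (q : J → ℝ) (s : ℝ)
    (hx0 : ∀ i, 0 ≤ x i) (hx1 : ∑ i, x i = 1)
    (hq01 : ∀ j, q j = 0 ∨ q j = 1) (hq1 : ∑ j, q j = 1)
    (hs : ∀ j, q j = 1 → s = ∑ i, C i j * x i) :
    ∀ i, s ≤ ∑ j, C i j * q j +
      ∑ i' ∈ Finset.univ.filter (fun i' => i' ≠ i),
        (Finset.univ.sup' Finset.univ_nonempty (fun j => C i' j - C i j)) * x i' := by
  intro i
  have hqnn : ∀ j, 0 ≤ q j := fun j => by rcases hq01 j with h | h <;> simp [h]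
  obtain ⟨j0, hj0⟩ : ∃ j, q j = 1 := by
    by_contra h
    push_neg at h
    have hz : ∀ j, q j = 0 := fun j => (hq01 j).resolve_right (h j)
    simp [hz] at hq1
  have hq0 : ∀ j, j ≠ j0 → q j = 0 := by
    intro j hj
    by_contra h
    have h1 : q j = 1 := (hq01 j).resolve_left h
    have h2 : (2:ℝ) ≤ ∑ j, q j := by
      calc (2:ℝ) = ∑ j' ∈ ({j0, j} : Finset J), q j' := by
            rw [Finset.sum_pair (Ne.symm hj), hj0, h1]; norm_num
        _ ≤ ∑ j, q j := Finset.sum_le_sum_of_subset_of_nonneg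
            (Finset.subset_univ _) (fun j' _ _ => hqnn j')
    linarith
  have hsumCq : ∑ j, C i j * q j = C i j0 := by
    rw [Finset.sum_eq_single j0]
    · rw [hj0, mul_one]
    · intro j _ hj; rw [hq0 j hj, mul_zero]
    · intro h; exact absurd (Finset.mem_univ j0) h
  have key : ∀ i' ∈ Finset.univ.filter (fun i' => i' ≠ i),
      (C i' j0 - C i j0) * x i' ≤
        (Finset.univ.sup' Finset.univ_nonempty (fun j => C i' j - C i j)) * x i' := by
    intro i' _
    exact mul_le_mul_of_nonneg_right (Finset.le_sup' (fun j => C i' j - C i j) (Finset.mem_univ j0)) (hx0 i')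
  calc s = ∑ i', C i' j0 * x i' := hs j0 hj0
    _ = C i j0 * ∑ i', x i' + ∑ i', (C i' j0 - C i j0) * x i' := by
        rw [Finset.mul_sum, ← Finset.sum_add_distrib]
        exact Finset.sum_congr rfl (fun i' _ => by ring)
    _ = C i j0 + ∑ i' ∈ Finset.univ.filter (fun i' => i' ≠ i),
          (C i' j0 - C i j0) * x i' := by
        rw [hx1, mul_one]
        congr 1
        refine (Finset.sum_filter_of_ne ?_).symm
        intro i' _ h hne
        exact h (by rw [hne]; ring)
    _ ≤ C i j0 + ∑ i' ∈ Finset.univ.filter (fun i' => i' ≠ i),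
          (Finset.univ.sup' Finset.univ_nonempty (fun j => C i' j - C i j)) * x i' :=
        add_le_add_right (Finset.sum_le_sum key) _
    _ = _ := by rw [hsumCq]
end

section
/- Let J be a nonempty finite set of targets, and let Dp, Du : J → ℝ satisfy Dp(j) ≥ Du(j) for all j ∈ J. Let c : J → ℝ satisfy 0 ≤ c_j ≤ 1 for all j ∈ J, let q : J → ℝ satisfy q_j ∈ {0,1} for all j and Σ_{j∈J} q_j = 1, and let f ∈ ℝ satisfy: for every j' ∈ J with q_{j'} = 1, f = (Dp(j') − Du(j')) · c_{j'} + Du(j'). Then for every j ∈ J, f ≤ (Dp(j) − Du(j)) · c_j + Du(j) + Σ_{j'∈J, j'≠j} (Dp(j') − Du(j)) · q_{j'}. -/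
theorem stmt_6 {J : Type*} [Fintype J] [DecidableEq J] [Nonempty J]
    (Dp Du : J → ℝ) (hD : ∀ j, Du j ≤ Dp j)
    (c : J → ℝ) (hc : ∀ j, 0 ≤ c j ∧ c j ≤ 1)
    (q : J → ℝ) (hq01 : ∀ j, q j = 0 ∨ q j = 1) (hq1 : ∑ j, q j = 1)
    (f : ℝ) (hf : ∀ j', q j' = 1 → f = (Dp j' - Du j') * c j' + Du j') :
    ∀ j, f ≤ (Dp j - Du j) * c j + Du j +
      ∑ j' ∈ Finset.univ.filter (fun j' => j' ≠ j), (Dp j' - Du j) * q j' := by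
  -- there exists j* with q j* = 1
  obtain ⟨js, hjs⟩ : ∃ js, q js = 1 := by
    by_contra h
    push_neg at h
    have : ∀ j, q j = 0 := fun j => (hq01 j).resolve_right (h j)
    simp [this] at hq1
  have hfval := hf js hjs
  intro j
  by_cases hj : js = j
  · subst hj
    have hzero : ∀ j' ∈ Finset.univ.filter (fun j' => j' ≠ js), (Dp j' - Du js) * q j' = 0 := by
      intro j' hj'
      simp only [Finset.mem_filter] at hj'
      rcases hq01 j' with h0 | h1
      · simp [h0]
      · exfalso
        have : q j' + q js ≤ ∑ x, q x := by
          have := Finset.sum_le_sum_of_subset_of_nonneg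
            (s := ({j', js} : Finset J)) (t := Finset.univ)
            (f := q) (by simp)
            (fun i _ _ => by rcases hq01 i with h | h <;> simp [h])
          simpa [Finset.sum_pair hj'.2] using this
        rw [h1, hjs, hq1] at this
        linarith
    rw [Finset.sum_eq_zero hzero]
    linarith [hfval]
  · -- j ≠ js; sum equals Dp js - Du j
    have hsum : ∑ j' ∈ Finset.univ.filter (fun j' => j' ≠ j), (Dp j' - Du j) * q j'
        = Dp js - Du j := by
      rw [Finset.sum_eq_single_of_mem js (by simp [hj])]
      · simp [hjs]
      · intro b hb hne
        rcases hq01 b with h0 | h1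
        · simp [h0]
        · exfalso
          have : q b + q js ≤ ∑ x, q x := by
            have := Finset.sum_le_sum_of_subset_of_nonneg
              (s := ({b, js} : Finset J)) (t := Finset.univ)
              (f := q) (by simp)
              (fun i _ _ => by rcases hq01 i with h | h <;> simp [h])
            simpa [Finset.sum_pair hne] using this
          rw [h1, hjs, hq1] at this
          linarith
    rw [hsum]
    have h1 : f ≤ Dp js := by
      have := (hc js).2
      have := hD js
      nlinarith [hfval]
    have h2 : 0 ≤ (Dp j - Du j) * c j := mul_nonneg (by linarith [hD j]) (hc j).1
    linarith
end

section
/- Let J be a nonempty finite set of targets, and let Dp, Du : J → ℝ satisfy Dp(j) ≥ Du(j) for all j ∈ J. Let q : J → ℝ satisfy q_j ∈ {0,1} for all j and Σ_{j∈J} q_j = 1. Then for every j ∈ J, Σ_{j'∈J, j'≠j} (Dp(j') − Du(j)) · q_{j'} ≤ (max_{l∈J} max(Dp(l), Du(l)) − min(Dp(j), Du(j))) · (1 − q_j). -/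
theorem stmt_7 {J : Type*} [Fintype J] [DecidableEq J] [Nonempty J]
    (Dp Du : J → ℝ) (hD : ∀ j, Du j ≤ Dp j)
    (q : J → ℝ) (hq01 : ∀ j, q j = 0 ∨ q j = 1) (hq1 : ∑ j, q j = 1) :
    ∀ j, ∑ j' ∈ Finset.univ.filter (fun j' => j' ≠ j), (Dp j' - Du j) * q j'
      ≤ (Finset.univ.sup' Finset.univ_nonempty (fun l => max (Dp l) (Du l))
          - min (Dp j) (Du j)) * (1 - q j) := by
  intro j
  set M := Finset.univ.sup' Finset.univ_nonempty (fun l => max (Dp l) (Du l)) with hM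
  have hsum : ∑ j' ∈ Finset.univ.filter (fun j' => j' ≠ j), q j' = 1 - q j := by
    rw [Finset.filter_ne', Finset.sum_erase_eq_sub (Finset.mem_univ j), hq1]
  calc ∑ j' ∈ Finset.univ.filter (fun j' => j' ≠ j), (Dp j' - Du j) * q j'
      ≤ ∑ j' ∈ Finset.univ.filter (fun j' => j' ≠ j), (M - min (Dp j) (Du j)) * q j' := by
        apply Finset.sum_le_sum
        intro i _
        have hq : 0 ≤ q i := by rcases hq01 i with h | h <;> simp [h]
        apply mul_le_mul_of_nonneg_right _ hq
        have h1 : Dp i ≤ M := le_trans (le_max_left _ _)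
          (Finset.le_sup' (fun l => max (Dp l) (Du l)) (Finset.mem_univ i))
        have h2 : min (Dp j) (Du j) ≤ Du j := min_le_right _ _
        linarith
    _ = (M - min (Dp j) (Du j)) * (1 - q j) := by rw [← Finset.mul_sum, hsum]
end

section
/- Let J be a nonempty finite set of targets, and let Ap, Au : J → ℝ satisfy Ap(j) ≤ Au(j) for all j ∈ J. Let q : J → ℝ satisfy q_j ∈ {0,1} for all j and Σ_{j∈J} q_j = 1. Then for every j ∈ J, Σ_{j'∈J, j'≠j} (Au(j') − Ap(j)) · q_{j'} ≤ (max_{l∈J} max(Ap(l), Au(l)) − min(Ap(j), Au(j))) · (1 − q_j). -/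
theorem stmt_9 {J : Type*} [Fintype J] [DecidableEq J] [Nonempty J]
    (Ap Au : J → ℝ) (hA : ∀ j, Ap j ≤ Au j)
    (q : J → ℝ) (hq01 : ∀ j, q j = 0 ∨ q j = 1) (hq1 : ∑ j, q j = 1) :
    ∀ j, ∑ j' ∈ Finset.univ.filter (fun j' => j' ≠ j), (Au j' - Ap j) * q j'
      ≤ (Finset.univ.sup' Finset.univ_nonempty (fun l => max (Ap l) (Au l))
          - min (Ap j) (Au j)) * (1 - q j) := by
  intro j
  set M := Finset.univ.sup' Finset.univ_nonempty (fun l => max (Ap l) (Au l)) with hM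
  have hq0 : ∀ j', 0 ≤ q j' := fun j' => by rcases hq01 j' with h | h <;> simp [h]
  have hle : ∀ j', Au j' - Ap j ≤ M - min (Ap j) (Au j) := by
    intro j'
    have h1 : Au j' ≤ M := le_trans (le_max_right (Ap j') (Au j')) (Finset.le_sup' (fun l => max (Ap l) (Au l)) (Finset.mem_univ j'))
    have h2 : min (Ap j) (Au j) ≤ Ap j := min_le_left _ _
    linarith
  calc ∑ j' ∈ Finset.univ.filter (fun j' => j' ≠ j), (Au j' - Ap j) * q j'
      ≤ ∑ j' ∈ Finset.univ.filter (fun j' => j' ≠ j), (M - min (Ap j) (Au j)) * q j' := by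
        apply Finset.sum_le_sum
        intro i _
        exact mul_le_mul_of_nonneg_right (hle i) (hq0 i)
    _ = (M - min (Ap j) (Au j)) * (1 - q j) := by
        rw [← Finset.mul_sum]
        congr 1
        have h := Finset.sum_filter_add_sum_filter_not Finset.univ (fun j' => j' ≠ j) q
        have h2 : ∑ j' ∈ Finset.univ.filter (fun j' => ¬ j' ≠ j), q j' = q j := by simp only [not_ne_iff]; rw [Finset.filter_eq']; simp
        linarith [hq1]
end

section
/- Let I and J be nonempty finite sets and R : I × J → ℝ. Let x : I → ℝ satisfy x_i ≥ 0 for all i and Σ_{i∈I} x_i = 1, let q : J → ℝ satisfy q_j ∈ {0,1} for all j and Σ_{j∈J} q_j = 1, and let f ∈ ℝ satisfy: for every j' ∈ J with q_{j'} = 1, f = Σ_{i∈I} R_{i,j'} x_i. Then for every j ∈ J, f ≤ Σ_{i∈I} R_{i,j} x_i + (max_{l∈J} max_{i∈I} (R_{i,l} − R_{i,j})) · (1 − q_j). -/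
theorem stmt_13 {I J : Type*} [Fintype I] [Fintype J] [Nonempty I] [Nonempty J]
    (R : I → J → ℝ) (x : I → ℝ) (q : J → ℝ) (f : ℝ)
    (hx0 : ∀ i, 0 ≤ x i) (hx1 : ∑ i, x i = 1)
    (hq01 : ∀ j, q j = 0 ∨ q j = 1) (hq1 : ∑ j, q j = 1)
    (hf : ∀ j', q j' = 1 → f = ∑ i, R i j' * x i) :
    ∀ j, f ≤ ∑ i, R i j * x i +
      (Finset.univ.sup' Finset.univ_nonempty (fun l =>
        Finset.univ.sup' Finset.univ_nonempty (fun i => R i l - R i j))) * (1 - q j) := by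
  intro j
  set M : ℝ := Finset.univ.sup' Finset.univ_nonempty (fun l =>
        Finset.univ.sup' Finset.univ_nonempty (fun i => R i l - R i j)) with hM
  -- there is some j' with q j' = 1
  have hex : ∃ j', q j' = 1 := by
    by_contra h
    push_neg at h
    have : ∀ j', q j' = 0 := fun j' => (hq01 j').resolve_right (h j')
    simp [this] at hq1
  obtain ⟨j', hj'⟩ := hex
  have hfj : f = ∑ i, R i j' * x i := hf j' hj'
  rcases hq01 j with h0 | h1
  · -- q j = 0
    have hub : ∀ i, R i j' - R i j ≤ M := by
      intro i
      calc R i j' - R i j ≤ Finset.univ.sup' Finset.univ_nonempty (fun i => R i j' - R i j) :=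
            Finset.le_sup' (fun i => R i j' - R i j) (Finset.mem_univ i)
        _ ≤ M := Finset.le_sup' (fun l => Finset.univ.sup' Finset.univ_nonempty (fun i => R i l - R i j)) (Finset.mem_univ j')
    have key : ∑ i, R i j' * x i ≤ ∑ i, R i j * x i + M := by
      have h1 : ∑ i, (R i j' - R i j) * x i ≤ ∑ i, M * x i := by
        apply Finset.sum_le_sum
        intro i _
        exact mul_le_mul_of_nonneg_right (hub i) (hx0 i)
      have h2 : ∑ i, M * x i = M := by
        rw [← Finset.mul_sum, hx1, mul_one]
      have h3 : ∑ i, (R i j' - R i j) * x i = ∑ i, R i j' * x i - ∑ i, R i j * x i := by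
        rw [← Finset.sum_sub_distrib]
        congr 1; ext i; ring
      linarith
    rw [hfj, h0]
    simpa using key
  · -- q j = 1
    rw [hf j h1, h1]
    simp
end
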